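/- Let G be a control flow graph with entry node v₀, and let G′ be the graph obtained from G by replacing every node v of G with a nonempty directed chain of fresh nodes P_v (with an edge from each node of the chain to the next), replacing every edge (u,v) of G with an edge from the last node of P_u to the first node of P_v, and taking the first node of P_{v₀} as the entry node of G′. Then the interval partitions of G and G′ correspond: for every interval I(h) of G, the set ⋃_{v ∈ I(h)} P_v is an interval of G′ whose header is the first node of P_h, and every interval of G′ arises in this way. In particular, replacing basic-block nodes by chains of statement or token nodes does not alter the partitioning of a control flow graph into intervals. -/

import Mathlib

/-- A directed graph with a distinguished set of vertices and an entry node,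
used to model control flow graphs. -/
structure CFGraph (α : Type*) where
  verts : Set α
  Edge : α → α → Prop
  entry : α

namespace CFGraph

variable {α : Type*}

/-- `G` is a control flow graph: the entry node is a vertex, edges join vertices,
and every vertex is reachable from the entry node. -/
def IsCFG (G : CFGraph α) : Prop :=
  G.entry ∈ G.verts ∧ (∀ u v, G.Edge u v → u ∈ G.verts ∧ v ∈ G.verts) ∧
    ∀ v ∈ G.verts, Relation.ReflTransGen G.Edge G.entry v

/-- A closed path: a path (consecutive nodes are joined by edges) of length at least
two whose first and last nodes coincide. -/
def IsClosedPath (G : CFGraph α) (p : List α) : Prop :=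
  p.Chain' G.Edge ∧ 2 ≤ p.length ∧ p.head? = p.getLast?

/-- `e` is an entry node of the set `S`: `e ∈ S` and either `e` is the entry node of the
graph or some immediate predecessor of `e` lies outside `S`. -/
def IsEntry (G : CFGraph α) (S : Set α) (e : α) : Prop :=
  e ∈ S ∧ (e = G.entry ∨ ∃ u ∈ G.verts, u ∉ S ∧ G.Edge u e)

/-- `S` is a single-entry region with header `h` in which every closed path contains `h`. -/
def IntervalProp (G : CFGraph α) (h : α) (S : Set α) : Prop :=
  S ⊆ G.verts ∧ h ∈ S ∧ (∀ e, G.IsEntry S e ↔ e = h) ∧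
    ∀ p : List α, G.IsClosedPath p → (∀ v ∈ p, v ∈ S) → h ∈ p

/-- `S` is an interval with header `h`: a maximal set containing `h` such that `h` is the
unique entry node of `S` and every closed path lying within `S` contains `h`. -/
def IsInterval (G : CFGraph α) (h : α) (S : Set α) : Prop :=
  G.IntervalProp h S ∧ ∀ T, G.IntervalProp h T → S ⊆ T → T = S

/-- `P` is a partition of the vertices of `G` into intervals. -/
def IsIntervalPartition (G : CFGraph α) (P : Set (Set α)) : Prop :=
  (∀ S ∈ P, ∃ h, G.IsInterval h S) ∧ P.PairwiseDisjoint id ∧ ⋃₀ P = G.verts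

/-- `L` is a loop structure with header `h`: `h ∈ L`, there is a back edge from some
`m ∈ L` to `h`, every node of `L` other than `h` has all its immediate predecessors
inside `L`, and every node of `L` lies on a path within `L` starting at `h`. -/
def IsLoop (G : CFGraph α) (h : α) (L : Set α) : Prop :=
  L ⊆ G.verts ∧ h ∈ L ∧ (∃ m ∈ L, G.Edge m h) ∧
    (∀ v ∈ L, v ≠ h → ∀ u, G.Edge u v → u ∈ L) ∧
    ∀ v ∈ L, Relation.ReflTransGen (fun a b => G.Edge a b ∧ a ∈ L ∧ b ∈ L) h v

/-- The loop `L` with header `h` contains no inner loop construct: every closed path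
lying entirely within `L` contains `h`. -/
def NoInnerLoop (G : CFGraph α) (h : α) (L : Set α) : Prop :=
  ∀ p : List α, G.IsClosedPath p → (∀ v ∈ p, v ∈ L) → h ∈ p

end CFGraph

namespace CFGraph

variable {α β : Type*}

/-- Membership in the interval grown from header `h`, given that the nodes in `C`
already belong to previously constructed intervals: starting from `h`, repeatedly add
any node (not already in some interval) all of whose immediate predecessors already lie
in the interval. -/
inductive IntMem (G : CFGraph α) (C : Set α) (h : α) : α → Prop
  | head : IntMem G C h h
  | step (v : α) (hv : v ∈ G.verts) (hvC : v ∉ C)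
      (hpre : ∀ u, G.Edge u v → IntMem G C h u) : IntMem G C h v

/-- The interval constructed from header `h`, given already-covered nodes `C`. -/
def intervalOf (G : CFGraph α) (C : Set α) (h : α) : Set α := {v | IntMem G C h v}

/-- The new headers produced after computing an interval `I`: nodes not in any interval
(`C` is the set of covered nodes, including `I`) having at least one immediate
predecessor inside the just-computed interval `I` and at least one outside it. -/
def newHeaders (G : CFGraph α) (C : Set α) (I : Set α) : Set α :=
  {v | v ∈ G.verts ∧ v ∉ C ∧ (∃ m₁, G.Edge m₁ v ∧ m₁ ∈ I) ∧ ∃ m₂, G.Edge m₂ v ∧ m₂ ∉ I}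

/-- `Run G H C 𝒮`: starting from the pending header set `H` and covered node set `C`,
the iterative header-selection procedure can terminate (with no headers remaining)
having constructed precisely the collection `𝒮` of further header–interval pairs.
`Run G {G.entry} ∅ 𝒮` says that `𝒮` is the interval partition of `G` (with recorded
headers) produced by the procedure starting from the entry node. -/
inductive Run (G : CFGraph α) : Set α → Set α → Set (α × Set α) → Prop
  | done (C : Set α) : Run G ∅ C ∅
  | step (H C : Set α) (h : α) (𝒮 : Set (α × Set α)) (hh : h ∈ H)
      (hrest : Run G ((H \ {h}) ∪ newHeaders G (C ∪ intervalOf G C h) (intervalOf G C h))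
        (C ∪ intervalOf G C h) 𝒮) :
      Run G H C (insert (h, intervalOf G C h) 𝒮)

/-- The graph `G′` obtained from `G` by replacing every node `v` by the nonempty
directed chain of fresh nodes `chain v` (with an edge from each node of the chain to
the next), replacing every edge `(u, v)` of `G` by an edge from the last node of
`chain u` to the first node of `chain v`, and taking the first node `e0` of
`chain G.entry` as the entry node. -/
def expand (G : CFGraph α) (chain : α → List β) (e0 : β) : CFGraph β where
  verts := {x | ∃ v ∈ G.verts, x ∈ chain v}
  Edge x y :=
    (∃ v ∈ G.verts, ∃ i, (chain v)[i]? = some x ∧ (chain v)[i + 1]? = some y) ∨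
    (∃ u ∈ G.verts, ∃ v ∈ G.verts, G.Edge u v ∧
      (chain u).getLast? = some x ∧ (chain v).head? = some y)
  entry := e0

end CFGraph


namespace CFGraph

variable {α : Type*} (G : CFGraph α)

/-- State invariant of the header-selection procedure. -/
def Inv (H C : Set α) : Prop :=
  (∀ h' ∈ H, h' ∈ G.verts ∧ h' ∉ C ∧ (h' = G.entry ∨ ∃ m ∈ C, G.Edge m h')) ∧
  C ⊆ G.verts ∧
  (∀ u ∈ C, ∀ v, G.Edge u v → v ∈ C ∪ H) ∧
  (G.entry ∈ C ∨ (C = ∅ ∧ H = {G.entry}))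

variable {G}

lemma hasPred (hG : G.IsCFG) {v : α} (hv : v ∈ G.verts) (hvne : v ≠ G.entry) :
    ∃ u, G.Edge u v := by
  rcases (hG.2.2 v hv).cases_tail with h | ⟨c, _, hc⟩
  · exact absurd h hvne
  · exact ⟨c, hc⟩

lemma intMem_subset {H C : Set α} {h : α} (hInv : G.Inv H C) (hh : h ∈ H) :
    intervalOf G C h ⊆ G.verts := by
  intro v hv
  induction hv with
  | head => exact (hInv.1 h hh).1
  | step v hv _ _ _ => exact hv

lemma intMem_not_covered {C : Set α} {h : α} (hh : h ∉ C) {v : α}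
    (hv : IntMem G C h v) : v ∉ C := by
  cases hv with
  | head => exact hh
  | step v _ hvC _ => exact hvC

lemma intMem_anti {C C' : Set α} {h : α} (hCC : C ⊆ C') {v : α}
    (hv : IntMem G C' h v) : IntMem G C h v := by
  induction hv with
  | head => exact .head
  | step v hv hvC hpre ih => exact .step v hv (fun hc => hvC (hCC hc)) ih

lemma inv_init (hG : G.IsCFG) : G.Inv {G.entry} ∅ := by
  refine ⟨?_, by simp, by simp, Or.inr ⟨rfl, rfl⟩⟩
  rintro h' rfl
  exact ⟨hG.1, by simp, Or.inl rfl⟩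

/-- A pending header distinct from `h` is never absorbed into the interval of `h`. -/
lemma not_absorbed {H C : Set α} (hInv : G.Inv H C) {h h' : α} (hh : h ∈ H)
    (hh' : h' ∈ H) (hne : h' ≠ h) : h' ∉ intervalOf G C h := by
  intro hmem
  cases hmem with
  | head => exact hne rfl
  | step v hv hvC hpre =>
    rcases hInv.2.2.2 with hent | ⟨hC, hH⟩
    · rcases (hInv.1 h' hh').2.2 with heq | ⟨m, hm, hmh⟩
      · exact hvC (heq ▸ hent)
      · cases hpre m hmh with
        | head => exact (hInv.1 h hh).2.1 hm
        | step _ _ hmC _ => exact hmC hm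
    · apply hne
      rw [hH] at hh hh'
      exact hh'.trans hh.symm

lemma interval_disjoint (hG : G.IsCFG) {H C : Set α} (hInv : G.Inv H C) {h₁ h₂ : α}
    (h1 : h₁ ∈ H) (h2 : h₂ ∈ H) (hne12 : h₁ ≠ h₂) {v : α}
    (hv1 : IntMem G C h₁ v) : ¬ IntMem G C h₂ v := by
  induction hv1 with
  | head => exact not_absorbed hInv h2 h1 hne12
  | step v hv hvC hpre ih =>
    intro hv2
    cases hv2 with
    | head => exact not_absorbed hInv h1 h2 (Ne.symm hne12) (IntMem.step _ hv hvC hpre)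
    | step _ _ _ hpre2 =>
      have hvne : v ≠ G.entry := by
        rintro rfl
        rcases hInv.2.2.2 with hent | ⟨hC, hH⟩
        · exact hvC hent
        · rw [hH] at h1 h2
          exact hne12 (h1.trans h2.symm)
      obtain ⟨u, hu⟩ := hasPred hG hv hvne
      exact ih u hu (hpre2 u hu)

lemma interval_indep (hG : G.IsCFG) {H C : Set α} (hInv : G.Inv H C) {h₁ h₂ : α}
    (h1 : h₁ ∈ H) (h2 : h₂ ∈ H) (hne12 : h₁ ≠ h₂) :
    intervalOf G (C ∪ intervalOf G C h₁) h₂ = intervalOf G C h₂ := by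
  ext v
  constructor
  · exact fun hv => intMem_anti Set.subset_union_left hv
  · intro hv
    induction hv with
    | head => exact .head
    | step v hv hvC hpre ih =>
      refine IntMem.step v hv ?_ ih
      rintro (hC | hI)
      · exact hvC hC
      · exact interval_disjoint hG hInv h1 h2 hne12 hI (.step v hv hvC hpre)

lemma inv_step (hG : G.IsCFG) {H C : Set α} (hInv : G.Inv H C) {h : α} (hh : h ∈ H) :
    G.Inv ((H \ {h}) ∪ newHeaders G (C ∪ intervalOf G C h) (intervalOf G C h))
      (C ∪ intervalOf G C h) := by
  obtain ⟨hHd, hCv, hCl, hE⟩ := hInv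
  refine ⟨?_, ?_, ?_, ?_⟩
  · rintro h' (⟨hh', hne⟩ | hh')
    · have hne' : h' ≠ h := by simpa using hne
      obtain ⟨hv, hnc, hp⟩ := hHd h' hh'
      refine ⟨hv, ?_, ?_⟩
      · rintro (hc | hi)
        · exact hnc hc
        · exact not_absorbed ⟨hHd, hCv, hCl, hE⟩ hh hh' hne' hi
      · rcases hp with heq | ⟨m, hm, hmh⟩
        · exact Or.inl heq
        · exact Or.inr ⟨m, Or.inl hm, hmh⟩
    · obtain ⟨hv, hnc, ⟨m₁, hm₁e, hm₁⟩, _⟩ := hh'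
      exact ⟨hv, hnc, Or.inr ⟨m₁, Or.inr hm₁, hm₁e⟩⟩
  · rintro v (hc | hi)
    · exact hCv hc
    · exact intMem_subset ⟨hHd, hCv, hCl, hE⟩ hh hi
  · rintro u (hc | hi) v huv
    · rcases hCl u hc v huv with hvc | hvH
      · exact Or.inl (Or.inl hvc)
      · by_cases hvh : v = h
        · exact Or.inl (Or.inr (hvh ▸ IntMem.head))
        · exact Or.inr (Or.inl ⟨hvH, by simpa using hvh⟩)
    · by_cases hvCI : v ∈ C ∪ intervalOf G C h
      · exact Or.inl hvCI
      · refine Or.inr (Or.inr ⟨(hG.2.1 u v huv).2, hvCI, ⟨u, huv, hi⟩, ?_⟩)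
        by_contra hnone
        push_neg at hnone
        refine hvCI (Or.inr (IntMem.step v (hG.2.1 u v huv).2 (fun hc => hvCI (Or.inl hc)) ?_))
        intro m₂ hm₂
        by_contra hm₂I
        exact hm₂I (hnone m₂ hm₂)
  · rcases hE with hent | ⟨hC, hH⟩
    · exact Or.inl (Or.inl hent)
    · rw [hH] at hh
      exact Or.inl (Or.inr (hh ▸ IntMem.head))

lemma run_fst_not_covered (hG : G.IsCFG) {H C : Set α} {𝒮 : Set (α × Set α)}
    (hrun : Run G H C 𝒮) : G.Inv H C → ∀ q ∈ 𝒮, q.1 ∉ C := by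
  induction hrun with
  | done C => intro _ q hq; exact absurd hq (Set.notMem_empty q)
  | step H C h 𝒮 hh hrest ih =>
    intro hInv q hq
    rcases Set.mem_insert_iff.1 hq with rfl | hq'
    · exact (hInv.1 h hh).2.1
    · intro hqC
      exact ih (inv_step hG hInv hh) q hq' (Or.inl hqC)

lemma run_finite {H C : Set α} {𝒮 : Set (α × Set α)} (hrun : Run G H C 𝒮) :
    𝒮.Finite := by
  induction hrun with
  | done C => exact Set.finite_empty
  | step H C h 𝒮 hh hrest ih => exact ih.insert _

lemma run_pair_char (hG : G.IsCFG) {H C : Set α} {𝒮 : Set (α × Set α)}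
    (hrun : Run G H C 𝒮) : G.Inv H C → ∀ q ∈ 𝒮,
      ∃ H₁ C₁, G.Inv H₁ C₁ ∧ q.1 ∈ H₁ ∧ q.2 = intervalOf G C₁ q.1 := by
  induction hrun with
  | done C => intro _ q hq; exact absurd hq (Set.notMem_empty q)
  | step H C h 𝒮 hh hrest ih =>
    intro hInv q hq
    rcases Set.mem_insert_iff.1 hq with rfl | hq'
    · exact ⟨H, C, hInv, hh, rfl⟩
    · exact ih (inv_step hG hInv hh) q hq'

lemma run_coverage (hG : G.IsCFG) {H C : Set α} {𝒮 : Set (α × Set α)}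
    (hrun : Run G H C 𝒮) : G.Inv H C → ∀ v ∈ G.verts, v ∈ C ∨ ∃ q ∈ 𝒮, v ∈ q.2 := by
  induction hrun with
  | done C =>
    intro hInv v hv
    left
    have hent : G.entry ∈ C := by
      rcases hInv.2.2.2 with hc | ⟨_, hH⟩
      · exact hc
      · exact absurd hH.symm (by simp [Set.eq_empty_iff_forall_notMem])
    have hclosed : ∀ w, Relation.ReflTransGen G.Edge G.entry w → w ∈ C := by
      intro w hw
      induction hw with
      | refl => exact hent
      | tail _ he ih' =>
        rcases hInv.2.2.1 _ ih' _ he with hc | hH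
        · exact hc
        · exact absurd hH (Set.notMem_empty _)
    exact hclosed v (hG.2.2 v hv)
  | step H C h 𝒮 hh hrest ih =>
    intro hInv v hv
    rcases ih (inv_step hG hInv hh) v hv with (hc | hi) | ⟨q, hq, hvq⟩
    · exact Or.inl hc
    · exact Or.inr ⟨(h, intervalOf G C h), Set.mem_insert _ _, hi⟩
    · exact Or.inr ⟨q, Set.mem_insert_of_mem _ hq, hvq⟩

end CFGraph
namespace CFGraph

variable {α : Type*} {G : CFGraph α}

lemma nh_shrink (hG : G.IsCFG) {H C : Set α} (hInv : G.Inv H C) {h₁ h₂ : α}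
    (h1 : h₁ ∈ H) (h2 : h₂ ∈ H) (hne12 : h₁ ≠ h₂) :
    newHeaders G (C ∪ intervalOf G C h₁) (intervalOf G C h₁) \ {h₂} =
      newHeaders G (C ∪ intervalOf G C h₁ ∪ intervalOf G C h₂) (intervalOf G C h₁) := by
  ext v
  constructor
  · rintro ⟨⟨hv, hnc, ⟨m₁, hm₁e, hm₁⟩, hm₂⟩, hvne⟩
    have hvne' : v ≠ h₂ := by simpa using hvne
    refine ⟨hv, ?_, ⟨m₁, hm₁e, hm₁⟩, hm₂⟩
    rintro (hci | hi2)
    · exact hnc hci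
    · cases hi2 with
      | head => exact hvne' rfl
      | step _ _ _ hpre2 =>
        exact interval_disjoint hG hInv h1 h2 hne12 hm₁ (hpre2 m₁ hm₁e)
  · rintro ⟨hv, hnc, hm₁, hm₂⟩
    refine ⟨⟨hv, fun hci => hnc (Or.inl hci), hm₁, hm₂⟩, ?_⟩
    intro hv2
    rw [Set.mem_singleton_iff] at hv2
    exact hnc (Or.inr (hv2 ▸ IntMem.head))

/-- The state of the procedure after processing two distinct headers, in either order. -/
lemma two_step_state (hG : G.IsCFG) {H C : Set α} (hInv : G.Inv H C) {h₁ h₂ : α}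
    (h1 : h₁ ∈ H) (h2 : h₂ ∈ H) (hne12 : h₁ ≠ h₂) :
    ((((H \ {h₁}) ∪ newHeaders G (C ∪ intervalOf G C h₁) (intervalOf G C h₁)) \ {h₂}) ∪
      newHeaders G ((C ∪ intervalOf G C h₁) ∪
          intervalOf G (C ∪ intervalOf G C h₁) h₂)
        (intervalOf G (C ∪ intervalOf G C h₁) h₂)) =
      (((H \ {h₁}) \ {h₂}) ∪
        (newHeaders G (C ∪ intervalOf G C h₁ ∪ intervalOf G C h₂) (intervalOf G C h₁) ∪
         newHeaders G (C ∪ intervalOf G C h₁ ∪ intervalOf G C h₂) (intervalOf G C h₂))) := by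
  rw [interval_indep hG hInv h1 h2 hne12, Set.union_diff_distrib,
    nh_shrink hG hInv h1 h2 hne12, Set.union_assoc]

lemma covered_comm {C : Set α} {A B : Set α} :
    C ∪ A ∪ B = C ∪ B ∪ A := by
  rw [Set.union_assoc, Set.union_comm A B, Set.union_assoc]

lemma run_perm (hG : G.IsCFG) {H C : Set α} {𝒮 : Set (α × Set α)}
    (hrun : Run G H C 𝒮) : G.Inv H C → ∀ h ∈ H,
      (h, intervalOf G C h) ∈ 𝒮 ∧
      Run G ((H \ {h}) ∪ newHeaders G (C ∪ intervalOf G C h) (intervalOf G C h))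
        (C ∪ intervalOf G C h) (𝒮 \ {(h, intervalOf G C h)}) := by
  induction hrun with
  | done C => intro _ h hh; exact absurd hh (Set.notMem_empty h)
  | step H C h' 𝒮 hh' hrest ih =>
    intro hInv h hh
    by_cases he : h = h'
    · subst he
      refine ⟨Set.mem_insert _ _, ?_⟩
      have hnot : (h, intervalOf G C h) ∉ 𝒮 := by
        intro hmem
        exact run_fst_not_covered hG hrest (inv_step hG hInv hh) _ hmem
          (Or.inr IntMem.head)
      rw [Set.insert_diff_self_of_notMem hnot]
      exact hrest
    · have hhH : h ∈ (H \ {h'}) ∪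
          newHeaders G (C ∪ intervalOf G C h') (intervalOf G C h') :=
        Or.inl ⟨hh, by simpa using he⟩
      have hInv' := inv_step hG hInv hh'
      obtain ⟨hmem, hrun2⟩ := ih hInv' h hhH
      have hIeq : intervalOf G (C ∪ intervalOf G C h') h = intervalOf G C h :=
        interval_indep hG hInv hh' hh (Ne.symm he)
      rw [hIeq] at hmem hrun2
      refine ⟨Set.mem_insert_of_mem _ hmem, ?_⟩
      -- build: step with h' from the state after h
      have hInvh := inv_step hG hInv hh
      have hh'mem : h' ∈ (H \ {h}) ∪
          newHeaders G (C ∪ intervalOf G C h) (intervalOf G C h) :=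
        Or.inl ⟨hh', by simpa using Ne.symm he⟩
      have hIeq' : intervalOf G (C ∪ intervalOf G C h) h' = intervalOf G C h' :=
        interval_indep hG hInv hh hh' he
      -- massage hrun2's state into the state required by Run.step
      have hstate := two_step_state hG hInv hh' hh (Ne.symm he)
      rw [hIeq] at hstate
      have hstate' := two_step_state hG hInv hh hh' he
      rw [hIeq'] at hstate'
      have hsymm : ((H \ {h'}) \ {h}) ∪
          (newHeaders G (C ∪ intervalOf G C h' ∪ intervalOf G C h) (intervalOf G C h') ∪
           newHeaders G (C ∪ intervalOf G C h' ∪ intervalOf G C h) (intervalOf G C h)) =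
          ((H \ {h}) \ {h'}) ∪
          (newHeaders G (C ∪ intervalOf G C h ∪ intervalOf G C h') (intervalOf G C h) ∪
           newHeaders G (C ∪ intervalOf G C h ∪ intervalOf G C h') (intervalOf G C h')) := by
        rw [Set.diff_diff_comm, covered_comm, Set.union_comm (newHeaders _ _ _)]
      rw [hstate, hsymm, ← hstate'] at hrun2
      have hcov : (C ∪ intervalOf G C h') ∪ intervalOf G C h =
          (C ∪ intervalOf G C h) ∪ intervalOf G C h' := covered_comm
      rw [hcov] at hrun2
      rw [← hIeq'] at hrun2
      have hstep := Run.step _ _ h' _ hh'mem hrun2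
      rw [hIeq'] at hstep
      have hsets : insert (h', intervalOf G C h') (𝒮 \ {(h, intervalOf G C h)}) =
          insert (h', intervalOf G C h') 𝒮 \ {(h, intervalOf G C h)} := by
        rw [Set.insert_diff_of_notMem]
        simp only [Set.mem_singleton_iff, Prod.mk.injEq, not_and]
        intro hcontr
        exact absurd hcontr (Ne.symm he)
      rw [hsets] at hstep
      exact hstep

lemma run_det (hG : G.IsCFG) {H C : Set α} {𝒮₁ : Set (α × Set α)}
    (hrun1 : Run G H C 𝒮₁) : G.Inv H C → ∀ 𝒮₂, Run G H C 𝒮₂ → 𝒮₁ = 𝒮₂ := by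
  induction hrun1 with
  | done C =>
    intro _ 𝒮₂ h2
    cases h2 with
    | done => rfl
    | step H C h _ hh _ => exact absurd hh (Set.notMem_empty h)
  | step H C h 𝒮 hh hrest ih =>
    intro hInv 𝒮₂ h2
    obtain ⟨hmem, hrun2⟩ := run_perm hG h2 hInv h hh
    have heq := ih (inv_step hG hInv hh) _ hrun2
    rw [heq, Set.insert_diff_singleton, Set.insert_eq_of_mem hmem]

end CFGraph
namespace CFGraph

variable {α : Type*} {G : CFGraph α}

lemma closedPath_pred {p : List α} (hp : G.IsClosedPath p) {v : α} (hv : v ∈ p) :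
    ∃ u ∈ p, G.Edge u v := by
  obtain ⟨hchain, hlen, hcl⟩ := hp
  obtain ⟨i, hi, hiv⟩ := List.mem_iff_getElem.1 hv
  have hchain' := List.isChain_iff_getElem.1 hchain
  rcases Nat.eq_zero_or_pos i with rfl | hpos
  · -- v is the head, hence also the last element
    have h0 : p[0] = p[p.length - 1] := by
      have h1 : p.head? = some p[0] := by
        rw [List.head?_eq_getElem?]
        exact List.getElem?_eq_getElem (by omega)
      have h2 : p.getLast? = some p[p.length - 1] := by
        rw [List.getLast?_eq_getElem?]
        exact List.getElem?_eq_getElem (by omega)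
      rw [h1, h2] at hcl
      exact Option.some_injective _ hcl
    refine ⟨p[p.length - 2]'(by omega), List.getElem_mem _, ?_⟩
    have h1 := hchain' (p.length - 2) (by omega)
    have h2 : p[p.length - 2 + 1]'(by omega) = p[p.length - 1]'(by omega) := by
      congr 1
      omega
    rw [h2, ← h0, hiv] at h1
    exact h1
  · obtain ⟨k, rfl⟩ : ∃ k, i = k + 1 := ⟨i - 1, by omega⟩
    refine ⟨p[k]'(by omega), List.getElem_mem _, ?_⟩
    have h1 := hchain' k (by omega)
    rw [hiv] at h1
    exact h1

lemma intMem_avoid_closed {C : Set α} {h : α} {v : α} (hv : IntMem G C h v)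
    {p : List α} (hp : G.IsClosedPath p) (hnp : h ∉ p) : v ∉ p := by
  induction hv with
  | head => exact hnp
  | step v hvv hvC hpre ih =>
    intro hmem
    obtain ⟨u, hu, hedge⟩ := closedPath_pred hp hmem
    exact ih u hedge hu

lemma intervalProp_of (hG : G.IsCFG) {H C : Set α} (hInv : G.Inv H C) {h : α}
    (hh : h ∈ H) : G.IntervalProp h (intervalOf G C h) := by
  have hhC : h ∉ C := (hInv.1 h hh).2.1
  have hentry : G.IsEntry (intervalOf G C h) h := by
    refine ⟨IntMem.head, ?_⟩
    rcases (hInv.1 h hh).2.2 with heq | ⟨m, hm, hmh⟩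
    · exact Or.inl heq
    · exact Or.inr ⟨m, hInv.2.1 hm, fun hmem => intMem_not_covered hhC hmem hm, hmh⟩
  refine ⟨intMem_subset hInv hh, IntMem.head, ?_, ?_⟩
  · intro e
    constructor
    · rintro ⟨heS, hent | ⟨u, hu, huS, hue⟩⟩
      · -- e = entry
        rcases hInv.2.2.2 with hentC | ⟨hC, hH⟩
        · exact absurd hentC (hent ▸ intMem_not_covered hhC heS)
        · rw [hH] at hh
          exact hent.trans hh.symm
      · cases heS with
        | head => rfl
        | step _ _ _ hpre => exact absurd (hpre u hue) huS
    · rintro rfl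
      exact hentry
  · intro p hp hall
    by_contra hnp
    have hne : p ≠ [] := by
      intro heq
      rw [heq] at hp
      simpa using hp.2.1
    have hmem := List.head_mem hne
    exact intMem_avoid_closed (hall _ hmem) hp hnp hmem

end CFGraph
namespace CFGraph

variable {α : Type*} {G : CFGraph α}

/-- For a pair `(h, S)` produced by the run, there is a state `(H₁, C₁)` of the run at
which the interval `S` of `h` was computed, and moreover the covered set `C₁` at that
moment avoids any single-entry region `T` of `h` that avoids the initial covered set. -/
lemma run_pair_spec (hG : G.IsCFG) {H C : Set α} {𝒮 : Set (α × Set α)}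
    (hrun : Run G H C 𝒮) : G.Inv H C → ∀ h S T, (h, S) ∈ 𝒮 →
      G.IntervalProp h T → T ∩ C = ∅ →
      ∃ H₁ C₁, G.Inv H₁ C₁ ∧ h ∈ H₁ ∧ T ∩ C₁ = ∅ ∧ S = intervalOf G C₁ h := by
  induction hrun with
  | done C => intro _ h S T hmem; exact absurd hmem (Set.notMem_empty _)
  | step H C h' 𝒮 hh' hrest ih =>
    intro hInv h S T hmem hT hTC
    rcases Set.mem_insert_iff.1 hmem with heq | hmem'
    · obtain ⟨rfl, rfl⟩ := Prod.mk.injEq .. ▸ heq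
      exact ⟨H, C, hInv, hh', hTC, rfl⟩
    · have hInv' := inv_step hG hInv hh'
      have hne : h ≠ h' := by
        rintro rfl
        exact run_fst_not_covered hG hrest hInv' _ hmem' (Or.inr IntMem.head)
      have hnI : h ∉ intervalOf G C h' :=
        fun hi => run_fst_not_covered hG hrest hInv' _ hmem' (Or.inr hi)
      -- the interval of h' avoids T
      have hTI : ∀ v, IntMem G C h' v → v ∉ T := by
        intro v hv
        induction hv with
        | head =>
          intro hT'
          have hne' : ¬ G.IsEntry T h' := fun he => hne ((hT.2.2.1 h').1 he).symm
          rcases (hInv.1 h' hh').2.2 with heq' | ⟨m, hm, hmh⟩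
          · exact hne' ⟨hT', Or.inl heq'⟩
          · by_cases hmT : m ∈ T
            · exact absurd (Set.mem_inter hmT hm) (by rw [hTC]; exact Set.notMem_empty m)
            · exact hne' ⟨hT', Or.inr ⟨m, hInv.2.1 hm, hmT, hmh⟩⟩
        | step v hvv hvC hpre ihv =>
          intro hvT
          have hvh : v ≠ h := by
            rintro rfl
            exact hnI (IntMem.step v hvv hvC hpre)
          have hnotent : ¬ G.IsEntry T v := fun he => hvh ((hT.2.2.1 v).1 he)
          have hvne : v ≠ G.entry := fun heq => hnotent ⟨hvT, Or.inl heq⟩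
          obtain ⟨u, hu⟩ := hasPred hG hvv hvne
          have huT : u ∈ T := by
            by_contra huT
            exact hnotent ⟨hvT, Or.inr ⟨u, (hG.2.1 u v hu).1, huT, hu⟩⟩
          exact ihv u hu huT
      have hTC' : T ∩ (C ∪ intervalOf G C h') = ∅ := by
        rw [Set.inter_union_distrib_left, hTC, Set.empty_union]
        ext v
        simp only [Set.mem_inter_iff, Set.mem_empty_iff_false, iff_false, not_and]
        exact fun hvT hvI => hTI v hvI hvT
      exact ih hInv' h S T hmem' hT hTC'

/-- Maximality: any single-entry region `T` of `h` avoiding the covered set is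
contained in the interval of `h` produced by the run. -/
lemma run_max (hG : G.IsCFG) {H C : Set α} {𝒮 : Set (α × Set α)}
    (hrun : Run G H C 𝒮) (hInv : G.Inv H C) :
    ∀ h S T, (h, S) ∈ 𝒮 → G.IntervalProp h T → T ∩ C = ∅ → T ⊆ S := by
  intro h S T hmem hT hTC
  obtain ⟨H₁, C₁, hInv₁, hh₁, hTC₁, rfl⟩ := run_pair_spec hG hrun hInv h S T hmem hT hTC
  by_contra hsub
  rw [Set.not_subset] at hsub
  obtain ⟨v₀, hv₀T, hv₀S⟩ := hsub
  set D : Set α := T \ intervalOf G C₁ h with hD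
  have hv₀D : v₀ ∈ D := ⟨hv₀T, hv₀S⟩
  -- every node of D has an immediate predecessor in D
  have hDpred : ∀ v ∈ D, ∃ u, u ∈ D ∧ G.Edge u v := by
    rintro v ⟨hvT, hvS⟩
    have hvh : v ≠ h := by rintro rfl; exact hvS IntMem.head
    have hnotent : ¬ G.IsEntry T v := fun he => hvh ((hT.2.2.1 v).1 he)
    have hvne : v ≠ G.entry := fun heq => hnotent ⟨hvT, Or.inl heq⟩
    have hpredT : ∀ u, G.Edge u v → u ∈ T := by
      intro u hu
      by_contra huT
      exact hnotent ⟨hvT, Or.inr ⟨u, (hG.2.1 u v hu).1, huT, hu⟩⟩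
    by_contra hno
    push_neg at hno
    refine hvS (IntMem.step v (hT.1 hvT) ?_ ?_)
    · intro hvC₁
      exact absurd (Set.mem_inter hvT hvC₁) (by rw [hTC₁]; exact Set.notMem_empty v)
    · intro u hu
      by_contra huS
      exact hno u ⟨hpredT u hu, huS⟩ hu
  -- choose a predecessor function
  have hDpred' : ∀ v, ∃ u, v ∈ D → u ∈ D ∧ G.Edge u v := by
    intro v
    by_cases hv : v ∈ D
    · obtain ⟨u, hu⟩ := hDpred v hv
      exact ⟨u, fun _ => hu⟩
    · exact ⟨v, fun hc => absurd hc hv⟩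
  choose g hg using hDpred'
  have hwD : ∀ n, g^[n] v₀ ∈ D := by
    intro n
    induction n with
    | zero => exact hv₀D
    | succ n ihn =>
      rw [Function.iterate_succ_apply']
      exact (hg _ ihn).1
  -- no value of the walk repeats (else we build a closed path in T avoiding h)
  have hnorep : ∀ i j, i < j → g^[i] v₀ ≠ g^[j] v₀ := by
    intro i j hij heq
    set p : List α := (List.range (j - i + 1)).map (fun t => g^[j - t] v₀) with hp
    have hplen : p.length = j - i + 1 := by simp [hp]
    have hpel : ∀ t (ht : t < p.length), p[t] = g^[j - t] v₀ := by
      intro t ht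
      simp [hp]
    have hclosed : G.IsClosedPath p := by
      refine ⟨?_, by omega, ?_⟩
      · apply List.isChain_iff_getElem.2
        intro t ht
        rw [hpel t (by omega), hpel (t + 1) (by omega)]
        have h1 : j - t = (j - (t + 1)) + 1 := by omega
        rw [h1, Function.iterate_succ_apply']
        exact (hg _ (hwD _)).2
      · have hpne : p ≠ [] := by
          intro hc
          rw [hc] at hplen
          simp at hplen
        rw [List.head?_eq_getElem?, List.getLast?_eq_getElem?,
          List.getElem?_eq_getElem (by omega), List.getElem?_eq_getElem (by omega)]
        congr 1
        rw [hpel 0 (by omega), hpel (p.length - 1) (by omega)]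
        have h1 : j - 0 = j := by omega
        have h2 : j - (p.length - 1) = i := by omega
        rw [h1, h2, heq]
    have hhp : h ∈ p := by
      refine hT.2.2.2 p hclosed ?_
      intro x hx
      obtain ⟨t, ht, hxt⟩ := List.mem_iff_getElem.1 hx
      rw [hpel t ht] at hxt
      exact hxt ▸ (hwD _).1
    obtain ⟨t, ht, hth⟩ := List.mem_iff_getElem.1 hhp
    rw [hpel t ht] at hth
    exact (hwD (j - t)).2 (hth ▸ IntMem.head)
  -- the walk reaches the header of any interval it enters
  have hreach : ∀ (a : α) (C₂ : Set α) (v : α), IntMem G C₂ a v →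
      ∀ i, g^[i] v₀ = v → ∃ j, i ≤ j ∧ g^[j] v₀ = a := by
    intro a C₂ v hv
    induction hv with
    | head => exact fun i hi => ⟨i, le_rfl, hi⟩
    | step v hvv hvC hpre ihv =>
      intro i hi
      have hiD := hwD i
      rw [hi] at hiD
      have hgi : g^[i + 1] v₀ = g v := by
        rw [Function.iterate_succ_apply', hi]
      obtain ⟨j, hj1, hj2⟩ := ihv (g v) (hg v hiD).2 (i + 1) hgi
      exact ⟨j, by omega, hj2⟩
  -- the walk visits a header of the run infinitely often
  have hvisit : ∀ i, ∃ j, i ≤ j ∧ g^[j] v₀ ∈ Prod.fst '' 𝒮 := by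
    intro i
    have hiD := hwD i
    have hiV : g^[i] v₀ ∈ G.verts := hT.1 hiD.1
    rcases run_coverage hG hrun hInv _ hiV with hc | ⟨q, hq, hvq⟩
    · exact absurd (Set.mem_inter hiD.1 hc) (by rw [hTC]; exact Set.notMem_empty _)
    · obtain ⟨H₂, C₂, hInv₂, hmem₂, heq₂⟩ := run_pair_char hG hrun hInv q hq
      rw [heq₂] at hvq
      obtain ⟨j, hj1, hj2⟩ := hreach q.1 C₂ _ hvq i rfl
      exact ⟨j, hj1, ⟨q, hq, hj2.symm ▸ rfl⟩⟩
  -- build a strictly increasing sequence of header visits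
  have hseq : ∃ n : ℕ → ℕ, StrictMono n ∧ ∀ k, g^[n k] v₀ ∈ Prod.fst '' 𝒮 := by
    choose f hf1 hf2 using hvisit
    refine ⟨fun k => (fun m => f (m + 1))^[k] (f 0), ?_, ?_⟩
    · apply strictMono_nat_of_lt_succ
      intro k
      rw [Function.iterate_succ_apply']
      have := hf1 ((fun m => f (m + 1))^[k] (f 0) + 1)
      omega
    · intro k
      induction k with
      | zero => exact hf2 0
      | succ k ihk =>
        show g^[(fun m => f (m + 1))^[k + 1] (f 0)] v₀ ∈ Prod.fst '' 𝒮
        rw [Function.iterate_succ_apply']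
        exact hf2 _
  obtain ⟨n, hmono, hhd⟩ := hseq
  -- pigeonhole: two header visits coincide
  have hfin : (Prod.fst '' 𝒮).Finite := (run_finite hrun).image _
  obtain ⟨k, -, l, -, hkl, heq⟩ :=
    Set.infinite_univ.exists_ne_map_eq_of_mapsTo
      (f := fun k => g^[n k] v₀) (fun k _ => hhd k) hfin
  rcases lt_or_gt_of_ne hkl with hlt | hlt
  · exact hnorep (n k) (n l) (hmono hlt) heq
  · exact hnorep (n l) (n k) (hmono hlt) heq.symm

/-- Soundness of the header-selection procedure: every produced pair is an interval. -/
lemma run_sound (hG : G.IsCFG) {𝒮 : Set (α × Set α)}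
    (hrun : Run G {G.entry} ∅ 𝒮) : ∀ h S, (h, S) ∈ 𝒮 → G.IsInterval h S := by
  intro h S hmem
  have hInv := inv_init hG
  obtain ⟨H₁, C₁, hInv₁, hh₁, heq₁⟩ := run_pair_char hG hrun hInv (h, S) hmem
  constructor
  · have hip := intervalProp_of hG hInv₁ hh₁
    rw [← heq₁] at hip
    exact hip
  · intro T hT hST
    have hTS : T ⊆ S := run_max hG hrun hInv h S T hmem hT (Set.inter_empty T)
    exact Set.Subset.antisymm hTS hST

end CFGraph
namespace CFGraph

section Expand

variable {α β : Type*} {G : CFGraph α} {chain : α → List β} {e0 : β}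

/-- The union of the chains over a set of `G`-nodes. -/
def chainSet (chain : α → List β) (S : Set α) : Set β := {x | ∃ v ∈ S, x ∈ chain v}

/-- The heads of the chains over a set of `G`-nodes. -/
def headSet (chain : α → List β) (S : Set α) : Set β :=
  {x | ∃ v ∈ S, (chain v).head? = some x}

lemma mem_of_getElem?' {l : List β} {i : ℕ} {a : β} (h : l[i]? = some a) : a ∈ l := by
  obtain ⟨hlt, rfl⟩ := List.getElem?_eq_some_iff.1 h
  exact List.getElem_mem _

lemma mem_of_getLast?' {l : List β} {a : β} (h : l.getLast? = some a) : a ∈ l := by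
  rw [List.getLast?_eq_getElem?] at h
  exact mem_of_getElem?' h

lemma mem_of_head?' {l : List β} {a : β} (h : l.head? = some a) : a ∈ l := by
  rw [List.head?_eq_getElem?] at h
  exact mem_of_getElem?' h

variable (hG : G.IsCFG) (hne : ∀ v ∈ G.verts, chain v ≠ [])
  (hnodup : ∀ v ∈ G.verts, (chain v).Nodup)
  (hfresh : ∀ u ∈ G.verts, ∀ v ∈ G.verts, u ≠ v → ∀ x ∈ chain u, x ∉ chain v)

include hfresh in
lemma chain_unique {u v : α} {x : β} (hu : u ∈ G.verts) (hv : v ∈ G.verts)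
    (hxu : x ∈ chain u) (hxv : x ∈ chain v) : u = v := by
  by_contra hne'
  exact hfresh u hu v hv hne' x hxu hxv

include hfresh in
lemma chainSet_avoid {v : α} {x : β} {S : Set α} (hv : v ∈ G.verts) (hvS : v ∉ S)
    (hS : S ⊆ G.verts) (hx : x ∈ chain v) : x ∉ chainSet chain S := by
  rintro ⟨w, hwS, hxw⟩
  exact hvS (chain_unique hfresh hv (hS hwS) hx hxw ▸ hwS)

include hnodup hfresh in
/-- Characterization of the immediate predecessors of a node of the expanded graph. -/
lemma expand_pred {v : α} {i : ℕ} {x y : β} (hv : v ∈ G.verts)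
    (hx : (chain v)[i]? = some x) :
    (expand G chain e0).Edge y x ↔
      ((i ≠ 0 ∧ (chain v)[i - 1]? = some y) ∨
       (i = 0 ∧ ∃ u ∈ G.verts, G.Edge u v ∧ (chain u).getLast? = some y)) := by
  constructor
  · rintro (⟨w, hw, j, hj1, hj2⟩ | ⟨u, hu, w, hw, hedge, hlast, hhead⟩)
    · have hwv : w = v :=
        chain_unique hfresh hw hv (mem_of_getElem?' hj2) (mem_of_getElem?' hx)
      subst hwv
      have hji : j + 1 = i :=
        (List.getElem?_inj (List.getElem?_eq_some_iff.1 hj2).1 (hnodup w hw)).1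
          (hj2.trans hx.symm)
      refine Or.inl ⟨by omega, ?_⟩
      rw [show i - 1 = j from by omega]
      exact hj1
    · rw [List.head?_eq_getElem?] at hhead
      have hwv : w = v :=
        chain_unique hfresh hw hv (mem_of_getElem?' hhead) (mem_of_getElem?' hx)
      subst hwv
      have h0i : 0 = i :=
        (List.getElem?_inj (List.getElem?_eq_some_iff.1 hhead).1 (hnodup w hw)).1
          (hhead.trans hx.symm)
      exact Or.inr ⟨h0i.symm, u, hu, hedge, hlast⟩
  · rintro (⟨hi0, hy⟩ | ⟨hi0, u, hu, hedge, hlast⟩)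
    · refine Or.inl ⟨v, hv, i - 1, hy, ?_⟩
      rw [show i - 1 + 1 = i from by omega]
      exact hx
    · refine Or.inr ⟨u, hu, v, hv, hedge, hlast, ?_⟩
      subst hi0
      rw [List.head?_eq_getElem?]
      exact hx

include hnodup hfresh in
/-- If the head of the chain of `v` lies in the expanded interval and `v` is uncovered,
the whole chain of `v` lies in the expanded interval. -/
lemma chain_propagate {C : Set α} (hCv : C ⊆ G.verts) {e : β} {v : α}
    (hv : v ∈ G.verts) (hvC : v ∉ C)
    (hhead : ∀ x, (chain v).head? = some x →
      IntMem (expand G chain e0) (chainSet chain C) e x) :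
    ∀ (i : ℕ) (x : β), (chain v)[i]? = some x →
      IntMem (expand G chain e0) (chainSet chain C) e x := by
  intro i
  induction i with
  | zero =>
    intro x hx
    apply hhead
    rw [List.head?_eq_getElem?]
    exact hx
  | succ i ih =>
    intro x hx
    refine .step x ⟨v, hv, mem_of_getElem?' hx⟩
      (chainSet_avoid hfresh hv hvC hCv (mem_of_getElem?' hx)) ?_
    intro y hy
    rcases (expand_pred hnodup hfresh hv hx).1 hy with ⟨_, hy'⟩ | ⟨hc, _⟩
    · exact ih y (by simpa using hy')
    · exact absurd hc (by omega)

include hG hnodup hfresh in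
lemma interval_sim_sub {H C : Set α} {h : α} {e : β} (hInv : G.Inv H C) (hh : h ∈ H)
    (he : (chain h).head? = some e) :
    ∀ v, IntMem G C h v → ∀ (i : ℕ) (x : β), (chain v)[i]? = some x →
      IntMem (expand G chain e0) (chainSet chain C) e x := by
  have hCv : C ⊆ G.verts := hInv.2.1
  intro v hv
  induction hv with
  | head =>
    refine chain_propagate hnodup hfresh hCv (hInv.1 h hh).1 (hInv.1 h hh).2.1 ?_
    intro x hx
    rw [he] at hx
    exact (Option.some_injective _ hx) ▸ IntMem.head
  | step v hvv hvC hpre ih =>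
    refine chain_propagate hnodup hfresh hCv hvv hvC ?_
    intro x hx
    have hx0 : (chain v)[0]? = some x := by rwa [List.head?_eq_getElem?] at hx
    refine .step x ⟨v, hvv, mem_of_getElem?' hx0⟩
      (chainSet_avoid hfresh hvv hvC hCv (mem_of_getElem?' hx0)) ?_
    intro y hy
    rcases (expand_pred hnodup hfresh hvv hx0).1 hy with ⟨hc, _⟩ | ⟨_, u, hu, hedge, hlast⟩
    · exact absurd rfl hc
    · rw [List.getLast?_eq_getElem?] at hlast
      exact ih u hedge _ y hlast

include hG hne hnodup hfresh in
lemma interval_sim_sup {H C : Set α} {h : α} {e : β} (hInv : G.Inv H C) (hh : h ∈ H)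
    (he : (chain h).head? = some e) :
    ∀ x, IntMem (expand G chain e0) (chainSet chain C) e x →
      x ∈ chainSet chain (intervalOf G C h) := by
  have hCv : C ⊆ G.verts := hInv.2.1
  have hIv : intervalOf G C h ⊆ G.verts := intMem_subset hInv hh
  intro x hx
  induction hx with
  | head => exact ⟨h, IntMem.head, mem_of_head?' he⟩
  | step x hxv hxC hpre ih =>
    obtain ⟨w, hw, hxw⟩ := hxv
    obtain ⟨i, hilt, hieq⟩ := List.mem_iff_getElem.1 hxw
    have hxi : (chain w)[i]? = some x := by
      rw [List.getElem?_eq_getElem hilt, hieq]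
    rcases Nat.eq_zero_or_pos i with rfl | hipos
    · -- x is the head of the chain of w
      by_cases hwh : w = h
      · exact ⟨h, IntMem.head, hwh ▸ hxw⟩
      · have hwC : w ∉ C := fun hc => hxC ⟨w, hc, hxw⟩
        have hwI : IntMem G C h w := by
          refine .step w hw hwC ?_
          intro u hu
          have huv : u ∈ G.verts := (hG.2.1 u w hu).1
          have hlast : ∃ y, (chain u).getLast? = some y := by
            cases hcu : (chain u).getLast? with
            | none => exact absurd (List.getLast?_eq_none_iff.1 hcu) (hne u huv)
            | some y => exact ⟨y, rfl⟩
          obtain ⟨y, hy⟩ := hlast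
          have hedge : (expand G chain e0).Edge y x :=
            (expand_pred hnodup hfresh hw hxi).2 (Or.inr ⟨rfl, u, huv, hu, hy⟩)
          obtain ⟨v', hv'I, hyv'⟩ := ih y hedge
          have : v' = u := chain_unique hfresh (hIv hv'I) huv hyv' (mem_of_getLast?' hy)
          exact this ▸ hv'I
        exact ⟨w, hwI, hxw⟩
    · -- x is an interior node; its predecessor in the same chain carries it along
      have hy : (chain w)[i - 1]? = some ((chain w)[i - 1]'(by omega)) :=
        List.getElem?_eq_getElem (by omega)
      have hedge : (expand G chain e0).Edge ((chain w)[i - 1]'(by omega)) x :=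
        (expand_pred hnodup hfresh hw hxi).2 (Or.inl ⟨by omega, hy⟩)
      obtain ⟨v', hv'I, hyv'⟩ := ih _ hedge
      have : v' = w :=
        chain_unique hfresh (hIv hv'I) hw hyv' (List.getElem_mem _)
      exact ⟨w, this ▸ hv'I, hxw⟩

include hG hne hnodup hfresh in
lemma interval_sim {H C : Set α} {h : α} {e : β} (hInv : G.Inv H C) (hh : h ∈ H)
    (he : (chain h).head? = some e) :
    intervalOf (expand G chain e0) (chainSet chain C) e =
      chainSet chain (intervalOf G C h) := by
  ext x
  constructor
  · exact interval_sim_sup hG hne hnodup hfresh hInv hh he x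
  · rintro ⟨v, hvI, hxv⟩
    obtain ⟨i, hilt, hieq⟩ := List.mem_iff_getElem.1 hxv
    exact interval_sim_sub hG hnodup hfresh hInv hh he v hvI i x
      (by rw [List.getElem?_eq_getElem hilt, hieq])

end Expand

end CFGraph
namespace CFGraph

section Expand2

variable {α β : Type*} {G : CFGraph α} {chain : α → List β} {e0 : β}

variable (hG : G.IsCFG) (hne : ∀ v ∈ G.verts, chain v ≠ [])
  (hnodup : ∀ v ∈ G.verts, (chain v).Nodup)
  (hfresh : ∀ u ∈ G.verts, ∀ v ∈ G.verts, u ≠ v → ∀ x ∈ chain u, x ∉ chain v)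
  (he0 : (chain G.entry).head? = some e0)

omit hG hne hnodup hfresh he0

lemma chainSet_union {A B : Set α} :
    chainSet chain (A ∪ B) = chainSet chain A ∪ chainSet chain B := by
  ext x
  simp only [chainSet, Set.mem_union, Set.mem_setOf_eq]
  constructor
  · rintro ⟨v, hv | hv, hx⟩
    · exact Or.inl ⟨v, hv, hx⟩
    · exact Or.inr ⟨v, hv, hx⟩
  · rintro (⟨v, hv, hx⟩ | ⟨v, hv, hx⟩)
    · exact ⟨v, Or.inl hv, hx⟩
    · exact ⟨v, Or.inr hv, hx⟩

lemma chainSet_empty : chainSet chain (∅ : Set α) = ∅ := by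
  ext x
  simp [chainSet]

lemma headSet_union {A B : Set α} :
    headSet chain (A ∪ B) = headSet chain A ∪ headSet chain B := by
  ext x
  simp only [headSet, Set.mem_union, Set.mem_setOf_eq]
  constructor
  · rintro ⟨v, hv | hv, hx⟩
    · exact Or.inl ⟨v, hv, hx⟩
    · exact Or.inr ⟨v, hv, hx⟩
  · rintro (⟨v, hv, hx⟩ | ⟨v, hv, hx⟩)
    · exact ⟨v, Or.inl hv, hx⟩
    · exact ⟨v, Or.inr hv, hx⟩

lemma headSet_empty : headSet chain (∅ : Set α) = ∅ := by
  ext x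
  simp [headSet]

include hfresh in
lemma headSet_diff {H : Set α} {h : α} {e : β} (hHv : H ⊆ G.verts) (hh : h ∈ H)
    (he : (chain h).head? = some e) :
    headSet chain (H \ {h}) = headSet chain H \ {e} := by
  ext x
  constructor
  · rintro ⟨v, ⟨hvH, hvne⟩, hx⟩
    refine ⟨⟨v, hvH, hx⟩, ?_⟩
    intro hxe
    rw [Set.mem_singleton_iff] at hxe
    subst hxe
    have hvh : v = h :=
      chain_unique hfresh (hHv hvH) (hHv hh) (mem_of_head?' hx) (mem_of_head?' he)
    simp only [Set.mem_singleton_iff] at hvne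
    exact hvne hvh
  · rintro ⟨⟨v, hvH, hx⟩, hxe⟩
    refine ⟨v, ⟨hvH, ?_⟩, hx⟩
    intro hvh
    rw [Set.mem_singleton_iff] at hvh
    subst hvh
    rw [he] at hx
    exact hxe (Set.mem_singleton_iff.2 (Option.some_injective _ hx).symm)

lemma headSet_singleton {h : α} {e : β} (he : (chain h).head? = some e) :
    headSet chain ({h} : Set α) = {e} := by
  ext x
  simp only [headSet, Set.mem_singleton_iff, Set.mem_setOf_eq]
  constructor
  · rintro ⟨v, rfl, hx⟩
    rw [he] at hx
    exact (Option.some_injective _ hx).symm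
  · rintro rfl
    exact ⟨h, rfl, he⟩

include hG hne hnodup hfresh in
lemma nh_sim {H C : Set α} {h : α} (hInv : G.Inv H C) (hh : h ∈ H) :
    newHeaders (expand G chain e0)
        (chainSet chain (C ∪ intervalOf G C h)) (chainSet chain (intervalOf G C h)) =
      headSet chain (newHeaders G (C ∪ intervalOf G C h) (intervalOf G C h)) := by
  have hIv : intervalOf G C h ⊆ G.verts := intMem_subset hInv hh
  have hCIv : C ∪ intervalOf G C h ⊆ G.verts := Set.union_subset hInv.2.1 hIv
  ext x
  constructor
  · rintro ⟨⟨w, hwv, hxw⟩, hxnc, ⟨y₁, hy₁e, hy₁I⟩, ⟨y₂, hy₂e, hy₂I⟩⟩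
    obtain ⟨i, hilt, hieq⟩ := List.mem_iff_getElem.1 hxw
    have hxi : (chain w)[i]? = some x := by
      rw [List.getElem?_eq_getElem hilt, hieq]
    rcases Nat.eq_zero_or_pos i with rfl | hipos
    · -- x is a chain head
      rcases (expand_pred hnodup hfresh hwv hxi).1 hy₁e with ⟨hc, _⟩ | ⟨_, u₁, hu₁, he₁, hl₁⟩
      · exact absurd rfl hc
      rcases (expand_pred hnodup hfresh hwv hxi).1 hy₂e with ⟨hc, _⟩ | ⟨_, u₂, hu₂, he₂, hl₂⟩
      · exact absurd rfl hc
      have hu₁I : u₁ ∈ intervalOf G C h := by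
        obtain ⟨v', hv'I, hy₁v'⟩ := hy₁I
        exact chain_unique hfresh (hIv hv'I) hu₁ hy₁v' (mem_of_getLast?' hl₁) ▸ hv'I
      have hu₂I : u₂ ∉ intervalOf G C h := by
        intro hc
        exact hy₂I ⟨u₂, hc, mem_of_getLast?' hl₂⟩
      have hwnc : w ∉ C ∪ intervalOf G C h := fun hc => hxnc ⟨w, hc, hxw⟩
      refine ⟨w, ⟨hwv, hwnc, ⟨u₁, he₁, hu₁I⟩, ⟨u₂, he₂, hu₂I⟩⟩, ?_⟩
      rw [List.head?_eq_getElem?]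
      exact hxi
    · -- interior nodes have a unique predecessor: contradiction
      exfalso
      rcases (expand_pred hnodup hfresh hwv hxi).1 hy₁e with ⟨_, hp₁⟩ | ⟨hc, _⟩
      swap
      · omega
      rcases (expand_pred hnodup hfresh hwv hxi).1 hy₂e with ⟨_, hp₂⟩ | ⟨hc, _⟩
      swap
      · omega
      have : y₁ = y₂ := Option.some_injective _ (hp₁.symm.trans hp₂)
      exact hy₂I (this ▸ hy₁I)
  · rintro ⟨w, ⟨hwv, hwnc, ⟨m₁, hm₁e, hm₁⟩, ⟨m₂, hm₂e, hm₂⟩⟩, hx⟩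
    have hm₁v : m₁ ∈ G.verts := (hG.2.1 m₁ w hm₁e).1
    have hm₂v : m₂ ∈ G.verts := (hG.2.1 m₂ w hm₂e).1
    obtain ⟨y₁, hy₁⟩ : ∃ y, (chain m₁).getLast? = some y := by
      cases hc : (chain m₁).getLast? with
      | none => exact absurd (List.getLast?_eq_none_iff.1 hc) (hne m₁ hm₁v)
      | some y => exact ⟨y, rfl⟩
    obtain ⟨y₂, hy₂⟩ : ∃ y, (chain m₂).getLast? = some y := by
      cases hc : (chain m₂).getLast? with
      | none => exact absurd (List.getLast?_eq_none_iff.1 hc) (hne m₂ hm₂v)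
      | some y => exact ⟨y, rfl⟩
    refine ⟨⟨w, hwv, mem_of_head?' hx⟩,
      chainSet_avoid hfresh hwv hwnc hCIv (mem_of_head?' hx), ?_, ?_⟩
    · exact ⟨y₁, Or.inr ⟨m₁, hm₁v, w, hwv, hm₁e, hy₁, hx⟩, ⟨m₁, hm₁, mem_of_getLast?' hy₁⟩⟩
    · refine ⟨y₂, Or.inr ⟨m₂, hm₂v, w, hwv, hm₂e, hy₂, hx⟩, ?_⟩
      exact chainSet_avoid hfresh hm₂v hm₂ hIv (mem_of_getLast?' hy₂)

include hG hne he0 in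
lemma expand_isCFG : (expand G chain e0).IsCFG := by
  have hsub1 : ∀ v ∈ G.verts, ∀ e, (chain v).head? = some e → ∀ (i : ℕ) (x : β),
      (chain v)[i]? = some x →
      Relation.ReflTransGen (expand G chain e0).Edge e x := by
    intro v hv e he i
    induction i with
    | zero =>
      intro x hx
      rw [List.head?_eq_getElem?, hx] at he
      obtain rfl : x = e := Option.some_injective _ he
      exact Relation.ReflTransGen.refl
    | succ i ih =>
      intro x hx
      have hilt : i < (chain v).length := by
        have := (List.getElem?_eq_some_iff.1 hx).1
        omega
      have hyi : (chain v)[i]? = some ((chain v)[i]'hilt) := List.getElem?_eq_getElem hilt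
      exact (ih _ hyi).tail (Or.inl ⟨v, hv, i, hyi, hx⟩)
  have hsub2 : ∀ v, Relation.ReflTransGen G.Edge G.entry v → v ∈ G.verts →
      ∃ e, (chain v).head? = some e ∧
        Relation.ReflTransGen (expand G chain e0).Edge e0 e := by
    intro v hrtg
    induction hrtg with
    | refl => exact fun _ => ⟨e0, he0, Relation.ReflTransGen.refl⟩
    | @tail u w hr hedge ih =>
      intro hwv
      have huv : u ∈ G.verts := (hG.2.1 u w hedge).1
      obtain ⟨eu, heu, hru⟩ := ih huv
      obtain ⟨ew, hew⟩ : ∃ e, (chain w).head? = some e := by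
        cases hc : (chain w).head? with
        | none => exact absurd (List.head?_eq_none_iff.1 hc) (hne w hwv)
        | some e => exact ⟨e, rfl⟩
      obtain ⟨lu, hlu⟩ : ∃ l, (chain u).getLast? = some l := by
        cases hc : (chain u).getLast? with
        | none => exact absurd (List.getLast?_eq_none_iff.1 hc) (hne u huv)
        | some l => exact ⟨l, rfl⟩
      refine ⟨ew, hew, ?_⟩
      have hlu' : (chain u)[(chain u).length - 1]? = some lu := by
        rw [← List.getLast?_eq_getElem?]
        exact hlu
      have h1 : Relation.ReflTransGen (expand G chain e0).Edge eu lu :=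
        hsub1 u huv eu heu _ lu hlu'
      exact (hru.trans h1).tail (Or.inr ⟨u, huv, w, hwv, hedge, hlu, hew⟩)
  refine ⟨⟨G.entry, hG.1, mem_of_head?' he0⟩, ?_, ?_⟩
  · rintro x y (⟨v, hv, j, hj1, hj2⟩ | ⟨u, hu, v, hv, hedge, hlast, hhead⟩)
    · exact ⟨⟨v, hv, mem_of_getElem?' hj1⟩, ⟨v, hv, mem_of_getElem?' hj2⟩⟩
    · exact ⟨⟨u, hu, mem_of_getLast?' hlast⟩, ⟨v, hv, mem_of_head?' hhead⟩⟩
  · rintro x ⟨v, hv, hxv⟩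
    obtain ⟨ev, hev, hrv⟩ := hsub2 v (hG.2.2 v hv) hv
    obtain ⟨i, hilt, hieq⟩ := List.mem_iff_getElem.1 hxv
    exact hrv.trans (hsub1 v hv ev hev i x (by rw [List.getElem?_eq_getElem hilt, hieq]))

include hG hne hnodup hfresh in
lemma sim_run {H C : Set α} {𝒮 : Set (α × Set α)} (hrun : Run G H C 𝒮) :
    G.Inv H C →
    Run (expand G chain e0) (headSet chain H) (chainSet chain C)
      {q : β × Set β | ∃ p ∈ 𝒮, (chain p.1).head? = some q.1 ∧
        q.2 = chainSet chain p.2} := by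
  induction hrun with
  | done C =>
    intro _
    have h1 : {q : β × Set β | ∃ p ∈ (∅ : Set (α × Set α)),
        (chain p.1).head? = some q.1 ∧ q.2 = chainSet chain p.2} = ∅ := by
      ext q
      simp
    rw [h1, headSet_empty]
    exact Run.done _
  | step H C h 𝒮 hh hrest ih =>
    intro hInv
    have hhv : h ∈ G.verts := (hInv.1 h hh).1
    obtain ⟨e, he⟩ : ∃ e, (chain h).head? = some e := by
      cases hc : (chain h).head? with
      | none => exact absurd (List.head?_eq_none_iff.1 hc) (hne h hhv)
      | some e => exact ⟨e, rfl⟩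
    have hkey : intervalOf (expand G chain e0) (chainSet chain C) e =
        chainSet chain (intervalOf G C h) :=
      interval_sim hG hne hnodup hfresh hInv hh he
    have hnh := nh_sim (e0 := e0) hG hne hnodup hfresh hInv hh
    have hIH := ih (inv_step hG hInv hh)
    have hsetq : {q : β × Set β | ∃ p ∈ insert (h, intervalOf G C h) 𝒮,
        (chain p.1).head? = some q.1 ∧ q.2 = chainSet chain p.2} =
        insert (e, chainSet chain (intervalOf G C h))
          {q : β × Set β | ∃ p ∈ 𝒮, (chain p.1).head? = some q.1 ∧
            q.2 = chainSet chain p.2} := by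
      ext q
      simp only [Set.mem_setOf_eq, Set.mem_insert_iff]
      constructor
      · rintro ⟨p, hp | hp, hq1, hq2⟩
        · subst hp
          left
          rw [he] at hq1
          exact Prod.ext (Option.some_injective _ hq1).symm hq2
        · exact Or.inr ⟨p, hp, hq1, hq2⟩
      · rintro (rfl | ⟨p, hp, hq1, hq2⟩)
        · exact ⟨(h, intervalOf G C h), Or.inl rfl, he, rfl⟩
        · exact ⟨p, Or.inr hp, hq1, hq2⟩
    rw [hsetq, ← hkey]
    refine Run.step _ _ e _ ⟨h, hh, he⟩ ?_
    rw [hkey]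
    have hnh' : newHeaders (expand G chain e0)
        (chainSet chain C ∪ chainSet chain (intervalOf G C h))
        (chainSet chain (intervalOf G C h)) =
        headSet chain (newHeaders G (C ∪ intervalOf G C h) (intervalOf G C h)) := by
      rw [← chainSet_union]
      exact hnh
    have hdiff : headSet chain (H \ {h}) = headSet chain H \ {e} :=
      headSet_diff hfresh (fun v hv => (hInv.1 v hv).1) hh he
    rw [hnh', ← hdiff, ← headSet_union, ← chainSet_union]
    exact hIH

end Expand2

end CFGraph

open CFGraph in
/-- Let `G` be a control flow graph with entry node `v₀ = G.entry`,
and let `G′ = expand G chain e0` be the graph obtained from `G` by replacing every node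
`v` of `G` by a nonempty directed chain of fresh nodes `chain v`, replacing every edge
`(u, v)` of `G` by an edge from the last node of `chain u` to the first node of
`chain v`, and taking the first node `e0` of `chain v₀` as the entry node of `G′`.
Then the interval partitions of `G` and `G′` (as produced by the header-selection
procedure) correspond: for every interval `I` of `G` with header `h`, the set
`⋃_{v ∈ I} chain v` is an interval of `G′` whose header is the first node of
`chain h`, and every interval of `G′` arises in this way. -/
theorem expand_interval_partition {α β : Type*} (G : CFGraph α) (hG : G.IsCFG)
    (chain : α → List β) (e0 : β)
    (hne : ∀ v ∈ G.verts, chain v ≠ [])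
    (hnodup : ∀ v ∈ G.verts, (chain v).Nodup)
    (hfresh : ∀ u ∈ G.verts, ∀ v ∈ G.verts, u ≠ v → ∀ x ∈ chain u, x ∉ chain v)
    (he0 : (chain G.entry).head? = some e0)
    (𝒮 : Set (α × Set α)) (hrun : Run G {G.entry} ∅ 𝒮)
    (𝒮' : Set (β × Set β)) (hrun' : Run (expand G chain e0) {e0} ∅ 𝒮') :
    (∀ p ∈ 𝒮, ∃ e, (chain p.1).head? = some e ∧
        (expand G chain e0).IsInterval e {x | ∃ v ∈ p.2, x ∈ chain v} ∧
        (e, {x | ∃ v ∈ p.2, x ∈ chain v}) ∈ 𝒮') ∧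
    (∀ q ∈ 𝒮', ∃ p ∈ 𝒮, (chain p.1).head? = some q.1 ∧
        q.2 = {x | ∃ v ∈ p.2, x ∈ chain v}) := by
  
  have hG' : (expand G chain e0).IsCFG := expand_isCFG hG hne he0
  have hsim := sim_run (e0 := e0) hG hne hnodup hfresh hrun (inv_init hG)
  rw [headSet_singleton he0, chainSet_empty] at hsim
  have hinv' : (expand G chain e0).Inv {e0} ∅ := inv_init hG'
  have h𝒮' : 𝒮' = {q : β × Set β | ∃ p ∈ 𝒮, (chain p.1).head? = some q.1 ∧
      q.2 = chainSet chain p.2} :=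
    run_det hG' hrun' hinv' _ hsim
  constructor
  · intro p hp
    obtain ⟨H₁, C₁, hInv₁, hh₁, -⟩ := run_pair_char hG hrun (inv_init hG) p hp
    have hp1v : p.1 ∈ G.verts := (hInv₁.1 _ hh₁).1
    obtain ⟨e, he⟩ : ∃ e, (chain p.1).head? = some e := by
      cases hc : (chain p.1).head? with
      | none => exact absurd (List.head?_eq_none_iff.1 hc) (hne _ hp1v)
      | some e => exact ⟨e, rfl⟩
    have hmem' : (e, chainSet chain p.2) ∈ 𝒮' := by
      rw [h𝒮']
      exact ⟨p, hp, he, rfl⟩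
    refine ⟨e, he, ?_, hmem'⟩
    exact run_sound hG' hrun' e (chainSet chain p.2) hmem'
  · intro q hq
    rw [h𝒮'] at hq
    obtain ⟨p, hp, hq1, hq2⟩ := hq
    exact ⟨p, hp, hq1, hq2⟩
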